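/- Under the Setup, the line L₁'' intersects the interior of the North side [AB] of ABCD and the interior of the East side [BC] of ABCD (dividing each of these two sides into two parts of positive length), and L₁'' is disjoint from the West side [AD]. -/

import Mathlib

open Real

noncomputable section

/-- Points of the Euclidean plane. -/
abbrev Pt := EuclideanSpace ℝ (Fin 2)

/-- An axis-aligned rectangle (all sides of positive length, parallel to the axes),
given by the coordinates of its sides. -/
structure AARect where
  xmin : ℝ
  xmax : ℝ
  ymin : ℝ
  ymax : ℝ
  hx : xmin < xmax
  hy : ymin < ymax

/-- The set of points of an axis-aligned rectangle. -/
def AARect.set (R : AARect) : Set Pt :=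
  {q | q 0 ∈ Set.Icc R.xmin R.xmax ∧ q 1 ∈ Set.Icc R.ymin R.ymax}

/-- The center of an axis-aligned rectangle. -/
def AARect.center (R : AARect) : Pt :=
  !₂[(R.xmin + R.xmax) / 2, (R.ymin + R.ymax) / 2]

/-- The North-West vertex `A`. -/
def AARect.A (R : AARect) : Pt := !₂[R.xmin, R.ymax]

/-- The North-East vertex `B`. -/
def AARect.B (R : AARect) : Pt := !₂[R.xmax, R.ymax]

/-- The South-East vertex `C`. -/
def AARect.C (R : AARect) : Pt := !₂[R.xmax, R.ymin]

/-- The South-West vertex `D`. -/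
def AARect.D (R : AARect) : Pt := !₂[R.xmin, R.ymin]

/-- The line through the point `p` with direction vector `v`. -/
def lineThrough (p v : Pt) : Set Pt := {q | ∃ t : ℝ, q = p + t • v}

/-- The closed half-plane to the right (East) of the (non-vertical) line through `p` with
direction `v`: the set of points having, on that line, a point with the same second
coordinate and a smaller-or-equal first coordinate. -/
def rightOf (p v : Pt) : Set Pt :=
  {q | ∃ w ∈ lineThrough p v, w 1 = q 1 ∧ w 0 ≤ q 0}

private lemma aux_key (n0 n1 s w h : ℝ) (hn0 : 0 < n0) (hn1 : 0 < n1)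
    (hnorm : n0^2 + n1^2 = 4) (hrel : n1 * s = n0 * w)
    (hw : 2 ≤ w) (hh : 2 ≤ h) (hs : 1 ≤ s) :
    n1 * w + n0 * s < (h + s) * w := by
  have h02 : n0 < 2 := by nlinarith
  have h12 : n1 < 2 := by nlinarith
  nlinarith [mul_nonneg (by linarith : (0:ℝ) ≤ h - 2) (by linarith : (0:ℝ) ≤ w),
             mul_pos (by linarith : (0:ℝ) < 2 - n1) (by linarith : (0:ℝ) < w),
             mul_nonneg (by linarith : (0:ℝ) ≤ s - 1) (by linarith : (0:ℝ) ≤ w - n0)]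

private lemma aux_north_lo (n0 n1 s w h : ℝ) (hn0 : 0 < n0) (hn1 : 0 < n1)
    (hnorm : n0^2 + n1^2 = 4) (hrel : n1 * s = n0 * w)
    (hs : 1 ≤ s) (hhs : h - s < 1) :
    n0*s + w*s + w*n1 > w*h := by
  have h12 : n1 < 2 := by nlinarith
  have h4 : n1 * (h - s) < 4 := by nlinarith [mul_pos hn1 (by linarith : (0:ℝ) < 1 - (h - s))]
  have hexp : n0 * (n0*s + w*s + w*n1 - w*h) = s*(4 - n1*(h-s)) := by
    linear_combination s*hnorm + (h - s - n1)*hrel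
  have hX : 0 < n0 * (n0*s + w*s + w*n1 - w*h) := by
    rw [hexp]; have hs0 : (0:ℝ) < s := by linarith
    nlinarith [mul_pos hs0 (by linarith : (0:ℝ) < 4 - n1*(h-s))]
  rcases mul_pos_iff.mp hX with ⟨_, hg⟩ | ⟨hg, _⟩
  · linarith
  · linarith

private lemma aux_west (n0 n1 s w h : ℝ) (hn0 : 0 < n0) (hn1 : 0 < n1)
    (hnorm : n0^2 + n1^2 = 4) (hrel : n1 * s = n0 * w)
    (hw : 2 ≤ w) (hs : 1 ≤ s) (hhs : h - s < 1) :
    n1*w + n0*s > (h - s)*w := by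
  have hwpos : (0:ℝ) < w := by linarith
  have h12 : n1 < 2 := by nlinarith
  have hid : (n1*w + n0*s) * (n1*w) = 4*w^2 := by
    linear_combination w^2*hnorm + n0*w*hrel
  have h2w : n1*w + n0*s ≥ 2*w := by
    nlinarith [hid, mul_pos hn1 hwpos, mul_nonneg (sq_nonneg w) (by linarith : (0:ℝ) ≤ 2 - n1)]
  nlinarith [mul_pos (by linarith : (0:ℝ) < 1 - (h - s)) hwpos]

private lemma aux_side (a b n0 n1 r : ℝ) (ha : a ≠ 0)
    (horth : n0*a + n1*b = 0) (hr1 : r*b = n1) (hr0 : r*a ≤ n0) : 0 ≤ n0 := by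
  have key1 : r * a * b^2 ≤ n0 * b^2 := mul_le_mul_of_nonneg_right hr0 (sq_nonneg _)
  have key2 : r * a * b^2 = -(n0 * a^2) := by
    linear_combination a * b * hr1 + a * horth
  nlinarith [key1, key2, pow_two_pos_of_ne_zero ha, sq_nonneg b]

set_option maxHeartbeats 1000000 in
/-- Setup: `R = ABCD` is an axis-aligned rectangle with all sides of length at least 4 and
center `p`; `L₁` is the line through `p` with direction `v` of negative slope, meeting
`[AD]` at `a` and `[BC]` at `d`, with `|Aa| < 1`; `p'` is the point at distance 2 from `p`
on the perpendicular to `L₁` through `p`, on the side of `L₁` to the right of `L₁`;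
`L₁''` is the line through `p'` parallel to `L₁`. Then `L₁''` meets the interior of the
North side `[AB]` and the interior of the East side `[BC]`, and is disjoint from the West
side `[AD]`. -/
theorem lineL1''_meets_AB_BC (R : AARect)
    (h4x : 4 ≤ R.xmax - R.xmin) (h4y : 4 ≤ R.ymax - R.ymin)
    (v : Pt) (hv : v 0 * v 1 < 0)
    (a : Pt) (haL : a ∈ lineThrough R.center v)
    (ha0 : a 0 = R.xmin) (ha1 : a 1 ∈ Set.Icc R.ymin R.ymax)
    (haA : dist R.A a < 1)
    (d : Pt) (hdL : d ∈ lineThrough R.center v)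
    (hd0 : d 0 = R.xmax) (hd1 : d 1 ∈ Set.Icc R.ymin R.ymax)
    (p' : Pt) (hp'dist : dist R.center p' = 2)
    (hp'perp : (inner ℝ (p' - R.center) v : ℝ) = 0)
    (hp'side : p' ∈ rightOf R.center v) :
    (∃ f ∈ lineThrough p' v, f 1 = R.ymax ∧ f 0 ∈ Set.Ioo R.xmin R.xmax) ∧
    (∃ j ∈ lineThrough p' v, j 0 = R.xmax ∧ j 1 ∈ Set.Ioo R.ymin R.ymax) ∧
    (∀ q ∈ lineThrough p' v, ¬(q 0 = R.xmin ∧ q 1 ∈ Set.Icc R.ymin R.ymax)) := by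
  have hv1 : v 1 ≠ 0 := by intro h; rw [h, mul_zero] at hv; exact lt_irrefl 0 hv
  have hv0 : v 0 ≠ 0 := by intro h; rw [h, zero_mul] at hv; exact lt_irrefl 0 hv
  have hc0 : R.center 0 = (R.xmin + R.xmax) / 2 := rfl
  have hc1 : R.center 1 = (R.ymin + R.ymax) / 2 := rfl
  obtain ⟨t, ht⟩ := haL
  set w := (R.xmax - R.xmin) / 2 with hwdef
  set hy := (R.ymax - R.ymin) / 2 with hhydef
  set n0 := p' 0 - R.center 0 with hn0def
  set n1 := p' 1 - R.center 1 with hn1def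
  set s := t * v 1 with hsdef
  have hw2 : 2 ≤ w := by rw [hwdef]; linarith
  have hh2 : 2 ≤ hy := by rw [hhydef]; linarith
  have hwpos : (0:ℝ) < w := by linarith only [hw2]
  -- a coordinates
  have hax : R.center 0 + t * v 0 = R.xmin := by rw [← ha0, ht]; simp
  have htv0 : t * v 0 = -w := by
    rw [hc0] at hax; rw [hwdef]; linarith only [hax]
  have hay : a 1 = R.center 1 + s := by rw [ht, hsdef]; simp
  have hsh : s ≤ hy := by
    have h2 := ha1.2; rw [hay, hc1] at h2; rw [hhydef]; linarith only [h2]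
  -- |Aa| < 1
  have hA0 : R.A 0 = R.xmin := rfl
  have hA1 : R.A 1 = R.ymax := rfl
  have hdA : dist R.A a = Real.sqrt ((R.A 0 - a 0)^2 + (R.A 1 - a 1)^2) := by
    rw [EuclideanSpace.dist_eq]; simp [Fin.sum_univ_two, Real.dist_eq, sq_abs]
  have habs : |R.ymax - a 1| < 1 := by
    rw [hdA, hA0, hA1, ha0] at haA
    simpa [Real.sqrt_sq_eq_abs] using haA
  have hhs : hy - s < 1 := by
    have h1 := (abs_lt.mp habs).2
    rw [hay, hc1] at h1; rw [hhydef]; linarith only [h1]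
  have hs1 : 1 ≤ s := by linarith only [hhs, hh2]
  have hspos : (0:ℝ) < s := by linarith only [hs1]
  -- norm of n
  have hnorm : n0^2 + n1^2 = 4 := by
    have hdp : dist R.center p' = Real.sqrt ((R.center 0 - p' 0)^2 + (R.center 1 - p' 1)^2) := by
      rw [EuclideanSpace.dist_eq]; simp [Fin.sum_univ_two, Real.dist_eq, sq_abs]
    have h2 : ((R.center 0 - p' 0)^2 + (R.center 1 - p' 1)^2) = 4 := by
      rw [← Real.sq_sqrt (by positivity : (0:ℝ) ≤ (R.center 0 - p' 0)^2 + (R.center 1 - p' 1)^2),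
        ← hdp, hp'dist]; norm_num
    rw [hn0def, hn1def]; linear_combination h2
  -- orthogonality
  have horth : n0 * v 0 + n1 * v 1 = 0 := by
    rw [PiLp.inner_apply] at hp'perp
    simp only [Fin.sum_univ_two, RCLike.inner_apply, conj_trivial, PiLp.sub_apply] at hp'perp
    rw [hn0def, hn1def]; linear_combination hp'perp
  -- side condition : n0 ≥ 0
  obtain ⟨w1, ⟨r, hw1r⟩, hw1y, hw1x⟩ := hp'side
  have hry : R.center 1 + r * v 1 = p' 1 := by rw [← hw1y, hw1r]; simp
  have hrv1 : r * v 1 = n1 := by rw [hn1def]; linarith only [hry]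
  have hrx : r * v 0 ≤ n0 := by
    rw [hw1r] at hw1x; simp at hw1x; rw [hn0def]; linarith only [hw1x]
  have hn0nn : 0 ≤ n0 := aux_side (v 0) (v 1) n0 n1 r hv0 horth hrv1 hrx
  -- relation n1 s = n0 w
  have hrel : n1 * s = n0 * w := by
    linear_combination t * horth - n0 * htv0 + n1 * hsdef
  have hn0pos : 0 < n0 := by
    rcases hn0nn.lt_or_eq with hlt | heq
    · exact hlt
    · exfalso
      have hz : n1 * s = 0 := by rw [hrel, ← heq]; ring
      have hn1z : n1 = 0 := by
        rcases mul_eq_zero.mp hz with h1 | h1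
        · exact h1
        · linarith only [h1, hspos]
      rw [← heq, hn1z] at hnorm; norm_num at hnorm
  have hn1pos : 0 < n1 := by
    have hns : 0 < n1 * s := by rw [hrel]; exact mul_pos hn0pos hwpos
    rcases mul_pos_iff.mp hns with ⟨h1, _⟩ | ⟨_, h2⟩
    · exact h1
    · exact absurd hspos (not_lt.mpr h2.le)
  -- the three key inequalities
  have hwest := aux_west n0 n1 s w hy hn0pos hn1pos hnorm hrel hw2 hs1 hhs
  have hkey := aux_key n0 n1 s w hy hn0pos hn1pos hnorm hrel hw2 hh2 hs1
  have hnlo := aux_north_lo n0 n1 s w hy hn0pos hn1pos hnorm hrel hs1 hhs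
  have hp0 : p' 0 = (R.xmin + R.xmax)/2 + n0 := by rw [hn0def, hc0]; ring
  have hp1 : p' 1 = (R.ymin + R.ymax)/2 + n1 := by rw [hn1def, hc1]; ring
  refine ⟨⟨p' + (t * (hy - n1) / s) • v, ⟨_, rfl⟩, ?_, ?_⟩,
    ⟨p' + (-(t * (w - n0) / w)) • v, ⟨_, rfl⟩, ?_, ?_⟩, ?_⟩
  · -- f 1 = ymax
    have hτ1 : t * (hy - n1) / s * v 1 = hy - n1 := by
      field_simp
      linear_combination (hy - n1) * hsdef
    show (p' + (t * (hy - n1) / s) • v) 1 = R.ymax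
    simp only [PiLp.add_apply, PiLp.smul_apply, smul_eq_mul]
    rw [hτ1]
    linarith only [hp1, hhydef, hc1, hn1def]
  · -- f 0 ∈ Ioo
    have hτ0 : t * (hy - n1) / s * v 0 = -(w * (hy - n1)) / s := by
      field_simp
      linear_combination (hy - n1) * htv0
    show (p' + (t * (hy - n1) / s) • v) 0 ∈ Set.Ioo R.xmin R.xmax
    rw [Set.mem_Ioo]
    simp only [PiLp.add_apply, PiLp.smul_apply, smul_eq_mul]
    rw [hτ0]
    constructor
    · have h1 : -(w + n0) < -(w * (hy - n1)) / s := by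
        rw [lt_div_iff₀ hspos]
        linarith only [hnlo]
      linarith only [h1, hp0, hwdef, hc0, hn0def]
    · have h2 : -(w * (hy - n1)) / s < w - n0 := by
        rw [div_lt_iff₀ hspos]
        linarith only [hkey]
      linarith only [h2, hp0, hwdef, hc0, hn0def]
  · -- j 0 = xmax
    have hτj0 : -(t * (w - n0) / w) * v 0 = w - n0 := by
      field_simp
      linear_combination (n0 - w) * htv0
    show (p' + (-(t * (w - n0) / w)) • v) 0 = R.xmax
    simp only [PiLp.add_apply, PiLp.smul_apply, smul_eq_mul]
    rw [hτj0]
    linarith only [hp0, hwdef, hc0, hn0def]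
  · -- j 1 ∈ Ioo
    have hτj1 : -(t * (w - n0) / w) * v 1 = -(s * (w - n0)) / w := by
      rw [hsdef]; ring
    show (p' + (-(t * (w - n0) / w)) • v) 1 ∈ Set.Ioo R.ymin R.ymax
    rw [Set.mem_Ioo]
    simp only [PiLp.add_apply, PiLp.smul_apply, smul_eq_mul]
    rw [hτj1]
    constructor
    · have h1 : -(hy + n1) < -(s * (w - n0)) / w := by
        rw [lt_div_iff₀ hwpos]
        linarith only [mul_pos hn1pos hwpos, mul_pos hn0pos hspos,
          mul_nonneg (by linarith only [hsh] : (0:ℝ) ≤ hy - s) hwpos.le]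
      linarith only [h1, hp1, hhydef, hc1, hn1def]
    · have h2 : -(s * (w - n0)) / w < hy - n1 := by
        rw [div_lt_iff₀ hwpos]
        linarith only [hkey]
      linarith only [h2, hp1, hhydef, hc1, hn1def]
  · -- west side disjoint
    rintro q ⟨τ, rfl⟩ ⟨hq0, hq1⟩
    rw [Set.mem_Icc] at hq1
    have hq0' : p' 0 + τ * v 0 = R.xmin := by
      simpa only [PiLp.add_apply, PiLp.smul_apply, smul_eq_mul] using hq0
    have hτv0 : τ * v 0 = -w - n0 := by
      rw [hp0] at hq0'; rw [hwdef]; linarith only [hq0', hwdef]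
    have hτv1w : τ * v 1 * w = (w + n0) * s := by
      linear_combination (τ * v 1) * htv0 - (t * v 1) * hτv0 - (w + n0) * hsdef
    have hhi : p' 1 + τ * v 1 ≤ R.ymax := by
      simpa only [PiLp.add_apply, PiLp.smul_apply, smul_eq_mul] using hq1.2
    have hle : n1 + τ * v 1 ≤ hy := by
      rw [hp1] at hhi; rw [hhydef]; linarith only [hhi, hhydef]
    have hmul : (n1 + τ * v 1) * w ≤ hy * w := mul_le_mul_of_nonneg_right hle hwpos.le
    linarith only [hmul, hτv1w, hwest]

end
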